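/- For every n ≥ 4 and every m ∈ {1,…,n}, the square commutes: q_m ∘ φ_n = φ_{n-1} ∘ p_m as homomorphisms from PB_n to G_{n-1}^3. -/

import Mathlib

namespace GnkBrunnian

/-! ## Index types for generators -/

/-- Validity of a pair index: `1 ≤ i < j ≤ n`. -/
abbrev P2ok (n : ℕ) (p : ℕ × ℕ) : Prop := 1 ≤ p.1 ∧ p.1 < p.2 ∧ p.2 ≤ n

/-- Index type for the generators `a_{ij}` of `G_n^2` (and `b_{ij}` of `PB_n`). -/
abbrev PIdx (n : ℕ) := {p : ℕ × ℕ // P2ok n p}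

/-- Validity of a triple index: `1 ≤ i < j < k ≤ n`. -/
abbrev T3ok (n : ℕ) (t : ℕ × ℕ × ℕ) : Prop :=
  1 ≤ t.1 ∧ t.1 < t.2.1 ∧ t.2.1 < t.2.2 ∧ t.2.2 ≤ n

/-- Index type for the generators `a_{ijk}` of `G_n^3`. -/
abbrev TIdx (n : ℕ) := {t : ℕ × ℕ × ℕ // T3ok n t}

def sort2 (a b : ℕ) : ℕ × ℕ := (min a b, max a b)

def sort3 (a b c : ℕ) : ℕ × ℕ × ℕ :=
  (min a (min b c), a + b + c - min a (min b c) - max a (max b c), max a (max b c))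

def pairSet {n : ℕ} (p : PIdx n) : Finset ℕ := {p.1.1, p.1.2}

def tripSet {n : ℕ} (t : TIdx n) : Finset ℕ := {t.1.1, t.1.2.1, t.1.2.2}

/-- Reindexing after deleting the strand `m` : indices above `m` are decreased by one. -/
def del (m x : ℕ) : ℕ := if m < x then x - 1 else x

/-! ## The group `G_n^2` -/

/-- The free-group letter `a_{\{a,b\}}` (trivial if the index is out of range). -/
def fgen2 (n a b : ℕ) : FreeGroup (PIdx n) :=
  if h : P2ok n (sort2 a b) then FreeGroup.of ⟨sort2 a b, h⟩ else 1

/-- The defining relators of `G_n^2`. -/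
def rels2 (n : ℕ) : Set (FreeGroup (PIdx n)) :=
  {r | ∃ a : PIdx n, r = .of a * .of a} ∪
  {r | ∃ i j k l : ℕ,
      1 ≤ i ∧ i ≤ n ∧ 1 ≤ j ∧ j ≤ n ∧ 1 ≤ k ∧ k ≤ n ∧ 1 ≤ l ∧ l ≤ n ∧
      i ≠ j ∧ i ≠ k ∧ i ≠ l ∧ j ≠ k ∧ j ≠ l ∧ k ≠ l ∧
      r = fgen2 n i j * fgen2 n k l * (fgen2 n i j)⁻¹ * (fgen2 n k l)⁻¹} ∪
  {r | ∃ i j k : ℕ,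
      1 ≤ i ∧ i ≤ n ∧ 1 ≤ j ∧ j ≤ n ∧ 1 ≤ k ∧ k ≤ n ∧ i ≠ j ∧ i ≠ k ∧ j ≠ k ∧
      r = fgen2 n i j * fgen2 n i k * fgen2 n j k *
          (fgen2 n j k * fgen2 n i k * fgen2 n i j)⁻¹}

/-- The group `G_n^2`. -/
abbrev G2 (n : ℕ) := PresentedGroup (rels2 n)

/-- The generator `a_{\{a,b\}}` of `G_n^2` (trivial if the index is out of range). -/
def ggen2 (n a b : ℕ) : G2 n :=
  if h : P2ok n (sort2 a b) then PresentedGroup.of ⟨sort2 a b, h⟩ else 1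

/-- The element of `G_n^2` represented by a word in the generators. -/
def toG2 {n : ℕ} (β : List (PIdx n)) : G2 n :=
  (β.map fun a => (PresentedGroup.of a : G2 n)).prod

/-! ## The group `G_n^3` -/

/-- The free-group letter `a_{\{a,b,c\}}` (trivial if the index is out of range). -/
def fgen3 (n a b c : ℕ) : FreeGroup (TIdx n) :=
  if h : T3ok n (sort3 a b c) then FreeGroup.of ⟨sort3 a b c, h⟩ else 1

/-- The defining relators of `G_n^3`. -/
def rels3 (n : ℕ) : Set (FreeGroup (TIdx n)) :=
  {r | ∃ a : TIdx n, r = .of a * .of a} ∪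
  {r | ∃ a b : TIdx n, (tripSet a ∩ tripSet b).card < 2 ∧
      r = .of a * .of b * (.of a)⁻¹ * (.of b)⁻¹} ∪
  {r | ∃ i j k l : ℕ,
      1 ≤ i ∧ i ≤ n ∧ 1 ≤ j ∧ j ≤ n ∧ 1 ≤ k ∧ k ≤ n ∧ 1 ≤ l ∧ l ≤ n ∧
      i ≠ j ∧ i ≠ k ∧ i ≠ l ∧ j ≠ k ∧ j ≠ l ∧ k ≠ l ∧
      r = fgen3 n i j k * fgen3 n i j l * fgen3 n i k l * fgen3 n j k l *
          (fgen3 n j k l * fgen3 n i k l * fgen3 n i j l * fgen3 n i j k)⁻¹}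

/-- The group `G_n^3`. -/
abbrev G3 (n : ℕ) := PresentedGroup (rels3 n)

/-- The generator `a_{\{a,b,c\}}` of `G_n^3` (trivial if the index is out of range). -/
def ggen3 (n a b c : ℕ) : G3 n :=
  if h : T3ok n (sort3 a b c) then PresentedGroup.of ⟨sort3 a b c, h⟩ else 1

/-- The element of `G_n^3` represented by a word in the generators. -/
def toG3 {n : ℕ} (β : List (TIdx n)) : G3 n :=
  (β.map fun a => (PresentedGroup.of a : G3 n)).prod

/-! ## The pure braid group `PB_n` (standard Artin/Birman presentation) -/

/-- The defining relators of the pure braid group on `n` strands, in the standard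
presentation on the generators `b_{ij} = A_{ij}`, `1 ≤ i < j ≤ n`. -/
def relsPB (n : ℕ) : Set (FreeGroup (PIdx n)) :=
  {x | ∃ r s i j : ℕ, P2ok n (r, s) ∧ P2ok n (i, j) ∧ (s < i ∨ (i < r ∧ s < j)) ∧
      x = (fgen2 n r s)⁻¹ * fgen2 n i j * fgen2 n r s * (fgen2 n i j)⁻¹} ∪
  {x | ∃ r s j : ℕ, 1 ≤ r ∧ r < s ∧ s < j ∧ j ≤ n ∧
      x = (fgen2 n r s)⁻¹ * fgen2 n s j * fgen2 n r s *
          (fgen2 n r j * fgen2 n s j * (fgen2 n r j)⁻¹)⁻¹} ∪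
  {x | ∃ r s j : ℕ, 1 ≤ r ∧ r < s ∧ s < j ∧ j ≤ n ∧
      x = (fgen2 n r s)⁻¹ * fgen2 n r j * fgen2 n r s *
          ((fgen2 n r j * fgen2 n s j) * fgen2 n r j * (fgen2 n r j * fgen2 n s j)⁻¹)⁻¹} ∪
  {x | ∃ r i s j : ℕ, 1 ≤ r ∧ r < i ∧ i < s ∧ s < j ∧ j ≤ n ∧
      x = (fgen2 n r s)⁻¹ * fgen2 n i j * fgen2 n r s *
          ((fgen2 n r j * fgen2 n s j * (fgen2 n r j)⁻¹ * (fgen2 n s j)⁻¹) * fgen2 n i j *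
           (fgen2 n r j * fgen2 n s j * (fgen2 n r j)⁻¹ * (fgen2 n s j)⁻¹)⁻¹)⁻¹}

/-- The pure braid group on `n` strands. -/
abbrev PB (n : ℕ) := PresentedGroup (relsPB n)

/-- The standard generator `b_{ij}` of `PB_n` (trivial if the index is out of range). -/
def pbgen (n a b : ℕ) : PB n :=
  if h : P2ok n (sort2 a b) then PresentedGroup.of ⟨sort2 a b, h⟩ else 1

/-! ## The elements `c^n_{i,j}` and the homomorphism `φ_n` -/

/-- `c^n_{i,j} = (∏_{k=j+1}^{n} a_{ijk}) * (∏_{k=1, k∉{i,j}}^{j-1} a_{ijk}) ∈ G_n^3`. -/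
def cElt (n i j : ℕ) : G3 n :=
  (((List.range' (j + 1) (n - j)).map fun k => ggen3 n i j k).prod) *
  (((List.range' 1 (j - 1)).map fun k => ggen3 n i j k).prod)

/-- The image of `b_{ij}` under `φ_n`:
`(c^n_{i,i+1})⁻¹ ⋯ (c^n_{i,j-1})⁻¹ (c^n_{i,j})² c^n_{i,j-1} ⋯ c^n_{i,i+1}`. -/
def phiElt (n i j : ℕ) : G3 n :=
  (((List.range' (i + 1) (j - 1 - i)).map fun m => (cElt n i m)⁻¹).prod) *
  (cElt n i j) ^ 2 *
  (((List.range' (i + 1) (j - 1 - i)).reverse.map fun m => cElt n i m).prod)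

/-- `q` is the strand-deletion homomorphism `q_m : G_n^3 → G_{n-1}^3`. -/
def IsShift3 (n m : ℕ) (q : G3 n →* G3 (n - 1)) : Prop :=
  ∀ i j k : ℕ, 1 ≤ i → i < j → j < k → k ≤ n →
    q (ggen3 n i j k) =
      if m = i ∨ m = j ∨ m = k then 1
      else ggen3 (n - 1) (del m i) (del m j) (del m k)

/-- `p` is the strand-deletion homomorphism `p_m : PB_n → PB_{n-1}`. -/
def IsShiftPB (n m : ℕ) (p : PB n →* PB (n - 1)) : Prop :=
  ∀ i j : ℕ, 1 ≤ i → i < j → j ≤ n →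
    p (pbgen n i j) =
      if m = i ∨ m = j then 1 else pbgen (n - 1) (del m i) (del m j)

/-- `φ` is the Manturov–Nikonov homomorphism `φ_n : PB_n → G_n^3`. -/
def IsPhi (n : ℕ) (φ : PB n →* G3 n) : Prop :=
  ∀ i j : ℕ, 1 ≤ i → i < j → j ≤ n → φ (pbgen n i j) = phiElt n i j

/-! ## Words and good condition -/

def good2 {n : ℕ} (β : List (PIdx n)) : Prop := ∀ a : PIdx n, Even (β.count a)

def good3 {n : ℕ} (β : List (TIdx n)) : Prop := ∀ a : TIdx n, Even (β.count a)

/-! ## Free products of copies of `ℤ/2` -/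

/-- The free product of copies of `ℤ/2ℤ` indexed by `ι`. -/
abbrev FP2 (ι : Type) := PresentedGroup {r : FreeGroup ι | ∃ a : ι, r = .of a * .of a}

/-- Indices `l ∈ {1,…,n} \ {i,j,k}`. -/
abbrev SIdx3 (n i j k : ℕ) := {l : ℕ // (1 ≤ l ∧ l ≤ n) ∧ l ≠ i ∧ l ≠ j ∧ l ≠ k}

/-- The group `F_n^3` (for the fixed triple `(i,j,k)`). -/
abbrev F3 (n i j k : ℕ) := FP2 (SIdx3 n i j k → ZMod 2 × ZMod 2)

/-- Indices `k ∈ {1,…,n} \ {i,j}`. -/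
abbrev SIdx2 (n i j : ℕ) := {l : ℕ // (1 ≤ l ∧ l ≤ n) ∧ l ≠ i ∧ l ≠ j}

/-- The group `F_n^2` (for the fixed pair `(i,j)`). -/
abbrev F2 (n i j : ℕ) := FP2 (SIdx2 n i j → ZMod 2)

/-! ## The MN-invariants `w_{(i,j)}` and `w_{(i,j,k)}` -/

/-- The number of occurrences of the generator `a_{\{a,b\}}` in a word over `G_n^2`. -/
def cnt2 {n : ℕ} (β : List (PIdx n)) (a b : ℕ) : ℕ :=
  (β.filter fun x => decide (pairSet x = ({a, b} : Finset ℕ))).length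

/-- The number of occurrences of the generator `a_{\{a,b,c\}}` in a word over `G_n^3`. -/
def cnt3 {n : ℕ} (β : List (TIdx n)) (a b c : ℕ) : ℕ :=
  (β.filter fun x => decide (tripSet x = ({a, b, c} : Finset ℕ))).length

/-- `i_c` for an occurrence of `a_{ij}` with prefix `pre`: `i_c(k) = N_{ik} + N_{jk} (mod 2)`. -/
def iC2 {n : ℕ} (i j : ℕ) (pre : List (PIdx n)) : SIdx2 n i j → ZMod 2 :=
  fun k => ((cnt2 pre i k.1 + cnt2 pre j k.1 : ℕ) : ZMod 2)

/-- The MN-invariant `w_{(i,j)}` of a word over `G_n^2`. -/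
def w2 {n : ℕ} (i j : ℕ) (β : List (PIdx n)) : F2 n i j :=
  (((β.zipIdx.map Prod.swap).filter fun x => decide (pairSet x.2 = ({i, j} : Finset ℕ))).map
    fun x => (PresentedGroup.of (iC2 i j (β.take x.1)) : F2 n i j)).prod

/-- `i_c` for an occurrence of `a_{ijk}` with prefix `pre`:
`i_c(l) = (N_{jkl} + N_{ijl}, N_{ikl} + N_{ijl}) (mod 2)`. -/
def iC3 {n : ℕ} (i j k : ℕ) (pre : List (TIdx n)) : SIdx3 n i j k → ZMod 2 × ZMod 2 :=
  fun l => (((cnt3 pre j k l.1 + cnt3 pre i j l.1 : ℕ) : ZMod 2),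
            ((cnt3 pre i k l.1 + cnt3 pre i j l.1 : ℕ) : ZMod 2))

/-- The MN-invariant `w_{(i,j,k)}` of a word over `G_n^3`. -/
def w3 {n : ℕ} (i j k : ℕ) (β : List (TIdx n)) : F3 n i j k :=
  (((β.zipIdx.map Prod.swap).filter fun x => decide (tripSet x.2 = ({i, j, k} : Finset ℕ))).map
    fun x => (PresentedGroup.of (iC3 i j k (β.take x.1)) : F3 n i j k)).prod

/-! ## Explicit words for `c^n_{i,j}` and `φ_n(b_{ij})` -/

def tripMkS (n a b c : ℕ) : Option (TIdx n) :=
  if h : T3ok n (sort3 a b c) then some ⟨sort3 a b c, h⟩ else none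

def pairMkS (n a b : ℕ) : Option (PIdx n) :=
  if h : P2ok n (sort2 a b) then some ⟨sort2 a b, h⟩ else none

/-- The defining word of `c^n_{i,j}`. -/
def cWord (n i j : ℕ) : List (TIdx n) :=
  ((List.range' (j + 1) (n - j)).filterMap fun k => tripMkS n i j k) ++
  ((List.range' 1 (j - 1)).filterMap fun k => tripMkS n i j k)

/-- The defining word of `φ_n(b_{ij})`, with the inverses of the `c`-words expanded using
`a⁻¹ = a` for generators (i.e. by reversing the words). -/
def phiWord (n i j : ℕ) : List (TIdx n) :=
  (((List.range' (i + 1) (j - 1 - i)).map fun m => (cWord n i m).reverse).flatten) ++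
  cWord n i j ++ cWord n i j ++
  (((List.range' (i + 1) (j - 1 - i)).reverse.map fun m => cWord n i m).flatten)

/-! ## The group `G_{n,p}^2` (parity) -/

/-- Index type for the generators `a_{ij}^ε` of `G_{n,p}^2`. -/
abbrev PPIdx (n : ℕ) := PIdx n × ZMod 2

def fgenP2 (n a b : ℕ) (e : ZMod 2) : FreeGroup (PPIdx n) :=
  if h : P2ok n (sort2 a b) then FreeGroup.of (⟨sort2 a b, h⟩, e) else 1

/-- The defining relators of `G_{n,p}^2`. -/
def relsP2 (n : ℕ) : Set (FreeGroup (PPIdx n)) :=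
  {r | ∃ a : PPIdx n, r = .of a * .of a} ∪
  {r | ∃ (i j k l : ℕ) (e e' : ZMod 2),
      1 ≤ i ∧ i ≤ n ∧ 1 ≤ j ∧ j ≤ n ∧ 1 ≤ k ∧ k ≤ n ∧ 1 ≤ l ∧ l ≤ n ∧
      i ≠ j ∧ i ≠ k ∧ i ≠ l ∧ j ≠ k ∧ j ≠ l ∧ k ≠ l ∧
      r = fgenP2 n i j e * fgenP2 n k l e' * (fgenP2 n i j e)⁻¹ * (fgenP2 n k l e')⁻¹} ∪
  {r | ∃ (i j k : ℕ) (e1 e2 e3 : ZMod 2),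
      1 ≤ i ∧ i < j ∧ j < k ∧ k ≤ n ∧ e1 + e2 + e3 = 0 ∧
      r = fgenP2 n i j e1 * fgenP2 n i k e2 * fgenP2 n j k e3 *
          (fgenP2 n j k e3 * fgenP2 n i k e2 * fgenP2 n i j e1)⁻¹}

/-- The group `G_{n,p}^2`. -/
abbrev GP2 (n : ℕ) := PresentedGroup (relsP2 n)

/-- The element of `G_{n,p}^2` represented by a word in the generators. -/
def toGP2 {n : ℕ} (β : List (PPIdx n)) : GP2 n :=
  (β.map fun a => (PresentedGroup.of a : GP2 n)).prod

/-! ## The parity invariant `w^p_{ij}` on `G_{n,p}^2` -/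

/-- The number of occurrences of `a_{\{a,b\}}^e` in a word over `G_{n,p}^2`. -/
def cntP2 {n : ℕ} (β : List (PPIdx n)) (a b : ℕ) (e : ZMod 2) : ℕ :=
  (β.filter fun x => decide (pairSet x.1 = ({a, b} : Finset ℕ) ∧ x.2 = e)).length

/-- `i^p_c` for an occurrence of `a_{ij}^e` with prefix `pre`. -/
def iCP2 {n : ℕ} (i j : ℕ) (e : ZMod 2) (pre : List (PPIdx n)) : SIdx2 n i j → ZMod 2 :=
  fun k =>
    if e = 0 then ((cntP2 pre i k.1 0 + cntP2 pre j k.1 0 : ℕ) : ZMod 2)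
    else ((cntP2 pre i k.1 0 + cntP2 pre j k.1 1 : ℕ) : ZMod 2)

/-- The invariant `w^p_{ij}` of a word over `G_{n,p}^2`. -/
def wP2 {n : ℕ} (i j : ℕ) (β : List (PPIdx n)) : F2 n i j :=
  (((β.zipIdx.map Prod.swap).filter fun x => decide (pairSet x.2.1 = ({i, j} : Finset ℕ))).map
    fun x => (PresentedGroup.of (iCP2 i j x.2.2 (β.take x.1)) : F2 n i j)).prod

/-! ## The map `ψ_l : G_{n+1}^2 → G_{n,p}^2` -/

/-- The word over `G_{n,p}^2` obtained from a word over `G_{n+1}^2` by deleting the strand `l`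
and recording parities. -/
def psiWord (n l : ℕ) (β : List (PIdx (n + 1))) : List (PPIdx n) :=
  (β.zipIdx.map Prod.swap).filterMap fun x =>
    if l = x.2.1.1 ∨ l = x.2.1.2 then none
    else (pairMkS n (del l x.2.1.1) (del l x.2.1.2)).map fun p =>
      (p, ((cnt2 (β.take x.1) x.2.1.1 l + cnt2 (β.take x.1) x.2.1.2 l : ℕ) : ZMod 2))

/-! ## The group `G_{n,p}^3` (parity) -/

/-- Index type for the generators `a_{ijk}^ε` of `G_{n,p}^3`. -/
abbrev TPIdx (n : ℕ) := TIdx n × ZMod 2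

def fgenP3 (n a b c : ℕ) (e : ZMod 2) : FreeGroup (TPIdx n) :=
  if h : T3ok n (sort3 a b c) then FreeGroup.of (⟨sort3 a b c, h⟩, e) else 1

/-- The defining relators of `G_{n,p}^3`. -/
def relsP3 (n : ℕ) : Set (FreeGroup (TPIdx n)) :=
  {r | ∃ a : TPIdx n, r = .of a * .of a} ∪
  {r | ∃ a b : TPIdx n, (tripSet a.1 ∩ tripSet b.1).card < 2 ∧
      r = (.of a * .of b) ^ 2} ∪
  {r | ∃ (i j k l : ℕ) (ei ej ek el : ZMod 2),
      1 ≤ i ∧ i ≤ n ∧ 1 ≤ j ∧ j ≤ n ∧ 1 ≤ k ∧ k ≤ n ∧ 1 ≤ l ∧ l ≤ n ∧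
      i ≠ j ∧ i ≠ k ∧ i ≠ l ∧ j ≠ k ∧ j ≠ l ∧ k ≠ l ∧
      (if max (max i j) (max k l) = i then ej + ek + el
       else if max (max i j) (max k l) = j then ei + ek + el
       else if max (max i j) (max k l) = k then ei + ej + el
       else ei + ej + ek) = 0 ∧
      r = (fgenP3 n i j k el * fgenP3 n i j l ek * fgenP3 n i k l ej * fgenP3 n j k l ei) ^ 2}

/-- The group `G_{n,p}^3`. -/
abbrev GP3 (n : ℕ) := PresentedGroup (relsP3 n)

/-- The element of `G_{n,p}^3` represented by a word in the generators. -/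
def toGP3 {n : ℕ} (β : List (TPIdx n)) : GP3 n :=
  (β.map fun a => (PresentedGroup.of a : GP3 n)).prod

/-! ## The map `f : G_{n+1}^3 → G_{n,p}^3` -/

/-- The word over `G_{n,p}^3` obtained from a word over `G_{n+1}^3` by deleting the letters
containing the index `n+1` and recording parities. -/
def fWord (n : ℕ) (β : List (TIdx (n + 1))) : List (TPIdx n) :=
  (β.zipIdx.map Prod.swap).filterMap fun x =>
    if x.2.1.2.2 = n + 1 then none
    else (tripMkS n x.2.1.1 x.2.1.2.1 x.2.1.2.2).map fun t =>
      (t, ((cnt3 (β.take x.1) x.2.1.2.1 x.2.1.2.2 (n + 1) +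
            cnt3 (β.take x.1) x.2.1.1 x.2.1.2.2 (n + 1) : ℕ) : ZMod 2))

/-! ## The parity invariant `w^p_{ijk}` on `G_{n,p}^3` -/

/-- The group `F_n^3` with values in `ℤ/2` (for the parity invariant). -/
abbrev F3p (n i j k : ℕ) := FP2 (SIdx3 n i j k → ZMod 2)

/-- The number of occurrences of `a_{\{a,b,c\}}^e` in a word over `G_{n,p}^3`. -/
def cntP3 {n : ℕ} (β : List (TPIdx n)) (a b c : ℕ) (e : ZMod 2) : ℕ :=
  (β.filter fun x => decide (tripSet x.1 = ({a, b, c} : Finset ℕ) ∧ x.2 = e)).length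

/-- `i^p_c` for an occurrence of `a_{ijk}^e` with prefix `pre` (here `k > i, j`). -/
def iCP3 {n : ℕ} (i j k : ℕ) (e : ZMod 2) (pre : List (TPIdx n)) : SIdx3 n i j k → ZMod 2 :=
  fun l =>
    if e = 0 then
      (if k < l.1 then
        ((cntP3 pre i k l.1 0 + cntP3 pre j k l.1 0 + cntP3 pre i j l.1 1 : ℕ) : ZMod 2)
      else ((cntP3 pre i k l.1 0 + cntP3 pre j k l.1 0 : ℕ) : ZMod 2))
    else
      (if k < l.1 then
        ((cntP3 pre i k l.1 0 + cntP3 pre j k l.1 1 + cntP3 pre i j l.1 0 : ℕ) : ZMod 2)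
      else ((cntP3 pre i k l.1 0 + cntP3 pre j k l.1 1 : ℕ) : ZMod 2))

/-- The invariant `w^p_{ijk}` of a word over `G_{n,p}^3`. -/
def wP3 {n : ℕ} (i j k : ℕ) (β : List (TPIdx n)) : F3p n i j k :=
  (((β.zipIdx.map Prod.swap).filter fun x => decide (tripSet x.2.1 = ({i, j, k} : Finset ℕ))).map
    fun x => (PresentedGroup.of (iCP3 i j k x.2.2 (β.take x.1)) : F3p n i j k)).prod

section Aux

open List

lemma sort3_rot (a b c : ℕ) : sort3 a b c = sort3 c a b := by
  simp only [sort3, Prod.mk.injEq]; omega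

lemma sort3_swap (a b c : ℕ) : sort3 a b c = sort3 a c b := by
  simp only [sort3, Prod.mk.injEq]; omega

lemma ggen3_congr {n a b c a' b' c' : ℕ} (h : sort3 a b c = sort3 a' b' c') :
    ggen3 n a b c = ggen3 n a' b' c' := by
  simp only [ggen3, h]

lemma ggen3_one {n a b c : ℕ} (h : ¬ T3ok n (sort3 a b c)) : ggen3 n a b c = 1 := by
  unfold ggen3; exact dif_neg h

lemma ggen3_eq_one_of_eq {n a b c : ℕ} (h : a = b ∨ a = c ∨ b = c) : ggen3 n a b c = 1 := by
  apply ggen3_one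
  rintro ⟨h1, h2, h3, h4⟩
  simp only [sort3] at h1 h2 h3 h4
  omega

lemma map_range'_shift {α : Type*} (f : ℕ → α) (s c : ℕ) :
    (List.range' (s+1) c).map (fun k => f (k-1)) = (List.range' s c).map f := by
  induction c generalizing s with
  | zero => rfl
  | succ c ih => simp [List.range'_succ, ih (s+1)]

lemma range'_split {s c m : ℕ} (h1 : s ≤ m) (h2 : m < s + c) :
    List.range' s c = List.range' s (m - s) ++ m :: List.range' (m+1) (s + c - m - 1) := by
  have H := (List.range'_append_1 (s := s) (m := (m - s)) (n := (s + c - m - 1 + 1))).trans (congrArg (List.range' s) (Nat.add_comm _ _))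
  rw [show s + (m - s) = m by omega, List.range'_succ,
    show s + c - m - 1 + 1 + (m - s) = c by omega] at H
  exact H.symm

lemma q_ggen3 {n m : ℕ} (q : G3 n →* G3 (n - 1)) (hq : IsShift3 n m q)
    {i j k : ℕ} (hi : 1 ≤ i) (hij : i < j) (hj : j ≤ n) (hk1 : 1 ≤ k) (hk2 : k ≤ n) :
    q (ggen3 n i j k) =
      if m = i ∨ m = j ∨ m = k then 1
      else ggen3 (n - 1) (del m i) (del m j) (del m k) := by
  by_cases hki : k = i
  · subst hki
    rw [ggen3_eq_one_of_eq (by tauto), map_one]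
    by_cases hc : m = k ∨ m = j ∨ m = k
    · rw [if_pos hc]
    · rw [if_neg hc, ggen3_eq_one_of_eq (by tauto)]
  · by_cases hkj : k = j
    · subst hkj
      rw [ggen3_eq_one_of_eq (by tauto), map_one]
      by_cases hc : m = i ∨ m = k ∨ m = k
      · rw [if_pos hc]
      · rw [if_neg hc, ggen3_eq_one_of_eq (by tauto)]
    · rcases Nat.lt_trichotomy k i with hlt | heq | hgt
      · rw [ggen3_congr (sort3_rot i j k), hq k i j hk1 hlt hij hj]
        by_cases hc : m = i ∨ m = j ∨ m = k
        · rw [if_pos (by tauto), if_pos hc]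
        · rw [if_neg (by tauto), if_neg hc]
          exact ggen3_congr (sort3_rot (del m i) (del m j) (del m k)).symm
      · exact absurd heq hki
      · rcases Nat.lt_trichotomy k j with hlt' | heq' | hgt'
        · rw [ggen3_congr (sort3_swap i j k), hq i k j hi hgt hlt' hj]
          by_cases hc : m = i ∨ m = j ∨ m = k
          · rw [if_pos (by tauto), if_pos hc]
          · rw [if_neg (by tauto), if_neg hc]
            exact ggen3_congr (sort3_swap (del m i) (del m j) (del m k)).symm
        · exact absurd heq' hkj
        · exact hq i j k hi hij hgt' hk2

lemma q_cElt {n m : ℕ} (q : G3 n →* G3 (n - 1)) (hq : IsShift3 n m q)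
    (hm1 : 1 ≤ m) (hm2 : m ≤ n) {i j : ℕ} (hi : 1 ≤ i) (hij : i < j) (hj : j ≤ n) :
    q (cElt n i j) = if m = i ∨ m = j then 1 else cElt (n - 1) (del m i) (del m j) := by
  unfold cElt
  rw [map_mul, map_list_prod, map_list_prod, List.map_map, List.map_map]
  by_cases hc : m = i ∨ m = j
  · rw [if_pos hc]
    have key : ∀ (s c : ℕ), 1 ≤ s → s + c ≤ n + 1 →
        ((List.range' s c).map (⇑q ∘ fun k => ggen3 n i j k)).prod = 1 := by
      intro s c hs hsc
      apply List.prod_eq_one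
      intro x hx
      simp only [List.mem_map, Function.comp] at hx
      obtain ⟨k, hk, rfl⟩ := hx
      have hk' := List.mem_range'_1.mp hk
      rw [q_ggen3 q hq hi hij hj (by omega) (by omega), if_pos (by tauto)]
    rw [key (j+1) (n-j) (by omega) (by omega), key 1 (j-1) (by omega) (by omega), one_mul]
  · push_neg at hc
    obtain ⟨hmi, hmj⟩ := hc
    rw [if_neg (by tauto)]
    have hterm : ∀ k, 1 ≤ k → k ≤ n → (⇑q ∘ fun k => ggen3 n i j k) k =
        if m = k then 1 else ggen3 (n-1) (del m i) (del m j) (del m k) := by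
      intro k h1 h2
      simp only [Function.comp]
      rw [q_ggen3 q hq hi hij hj h1 h2]
      by_cases h : m = k
      · rw [if_pos (by tauto), if_pos h]
      · rw [if_neg (by tauto), if_neg h]
    rcases Nat.lt_or_ge j m with hjm | hmj2
    · -- m > j
      have di : del m i = i := if_neg (by omega)
      have dj : del m j = j := if_neg (by omega)
      rw [di, dj]
      have e2 : (List.range' 1 (j-1)).map (⇑q ∘ fun k => ggen3 n i j k) =
          (List.range' 1 (j-1)).map (fun k => ggen3 (n-1) i j k) := by
        apply List.map_congr_left
        intro k hk
        have hk' := List.mem_range'_1.mp hk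
        rw [hterm k (by omega) (by omega), if_neg (by omega), di, dj,
          show del m k = k from if_neg (by omega)]
      have e1 : List.range' (j+1) (n-j) =
          List.range' (j+1) (m-j-1) ++ m :: List.range' (m+1) (n-m) := by
        have h := range'_split (s := j+1) (c := n-j) (m := m) (by omega) (by omega)
        rw [show m - (j+1) = m-j-1 by omega, show (j+1)+(n-j)-m-1 = n-m by omega] at h
        exact h
      rw [e1, e2, List.map_append, List.map_cons, List.prod_append, List.prod_cons]
      rw [show (⇑q ∘ fun k => ggen3 n i j k) m = 1 from by
        rw [hterm m hm1 hm2, if_pos rfl], one_mul]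
      have e3 : (List.range' (j+1) (m-j-1)).map (⇑q ∘ fun k => ggen3 n i j k) =
          (List.range' (j+1) (m-j-1)).map (fun k => ggen3 (n-1) i j k) := by
        apply List.map_congr_left
        intro k hk
        have hk' := List.mem_range'_1.mp hk
        rw [hterm k (by omega) (by omega), if_neg (by omega), di, dj,
          show del m k = k from if_neg (by omega)]
      have e4 : (List.range' (m+1) (n-m)).map (⇑q ∘ fun k => ggen3 n i j k) =
          (List.range' (m+1) (n-m)).map (fun k => (fun t => ggen3 (n-1) i j t) (k-1)) := by
        apply List.map_congr_left
        intro k hk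
        have hk' := List.mem_range'_1.mp hk
        rw [hterm k (by omega) (by omega), if_neg (by omega), di, dj,
          show del m k = k - 1 from if_pos (by omega)]
      rw [e3, e4, map_range'_shift (fun t => ggen3 (n-1) i j t) m (n-m),
        ← List.prod_append, ← List.map_append]
      have e5 : List.range' (j+1) (m-j-1) ++ List.range' m (n-m) =
          List.range' (j+1) (n-1-j) := by
        have h := (List.range'_append_1 (s := (j+1)) (m := (m-j-1)) (n := (n-m))).trans (congrArg (List.range' (j+1)) (Nat.add_comm _ _))
        rw [show (j+1)+(m-j-1) = m from by omega,
          show (n-m) + (m-j-1) = n-1-j from by omega] at h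
        exact h
      rw [e5]
    · -- m < j
      have dj : del m j = j - 1 := if_pos (by omega)
      rw [dj]
      have e1 : (List.range' (j+1) (n-j)).map (⇑q ∘ fun k => ggen3 n i j k) =
          (List.range' (j+1) (n-j)).map
            (fun k => (fun t => ggen3 (n-1) (del m i) (j-1) t) (k-1)) := by
        apply List.map_congr_left
        intro k hk
        have hk' := List.mem_range'_1.mp hk
        rw [hterm k (by omega) (by omega), if_neg (by omega), dj,
          show del m k = k - 1 from if_pos (by omega)]
      rw [e1, map_range'_shift (fun t => ggen3 (n-1) (del m i) (j-1) t) j (n-j)]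
      have e2 : List.range' 1 (j-1) =
          List.range' 1 (m-1) ++ m :: List.range' (m+1) (j-m-1) := by
        have h := range'_split (s := 1) (c := j-1) (m := m) (by omega) (by omega)
        rw [show m - 1 = m-1 from rfl, show 1+(j-1)-m-1 = j-m-1 by omega] at h
        exact h
      rw [e2, List.map_append, List.map_cons, List.prod_append, List.prod_cons]
      rw [show (⇑q ∘ fun k => ggen3 n i j k) m = 1 from by
        rw [hterm m hm1 hm2, if_pos rfl], one_mul]
      have e3 : (List.range' 1 (m-1)).map (⇑q ∘ fun k => ggen3 n i j k) =
          (List.range' 1 (m-1)).map (fun k => ggen3 (n-1) (del m i) (j-1) k) := by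
        apply List.map_congr_left
        intro k hk
        have hk' := List.mem_range'_1.mp hk
        rw [hterm k (by omega) (by omega), if_neg (by omega), dj,
          show del m k = k from if_neg (by omega)]
      have e4 : (List.range' (m+1) (j-m-1)).map (⇑q ∘ fun k => ggen3 n i j k) =
          (List.range' (m+1) (j-m-1)).map
            (fun k => (fun t => ggen3 (n-1) (del m i) (j-1) t) (k-1)) := by
        apply List.map_congr_left
        intro k hk
        have hk' := List.mem_range'_1.mp hk
        rw [hterm k (by omega) (by omega), if_neg (by omega), dj,
          show del m k = k - 1 from if_pos (by omega)]
      rw [e3, e4, map_range'_shift (fun t => ggen3 (n-1) (del m i) (j-1) t) m (j-m-1),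
        ← List.prod_append, ← List.map_append]
      have e5 : List.range' 1 (m-1) ++ List.range' m (j-m-1) =
          List.range' 1 (j-2) := by
        have h := (List.range'_append_1 (s := 1) (m := (m-1)) (n := (j-m-1))).trans (congrArg (List.range' 1) (Nat.add_comm _ _))
        rw [show 1+(m-1) = m from by omega, show (j-m-1)+(m-1) = j-2 from by omega] at h
        exact h
      rw [e5, show (j-1)+1 = j from by omega, show n-1-(j-1) = n-j from by omega,
        show (j-1)-1 = j-2 from by omega]

lemma inv_rev_prod {G : Type*} [Group G] (L : List G) :
    (L.map (·⁻¹)).prod * L.reverse.prod = 1 := by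
  induction L with
  | nil => simp
  | cons a L ih =>
    simp only [List.map_cons, List.prod_cons, List.reverse_cons,
      List.prod_append, List.prod_cons, List.prod_nil, mul_one]
    rw [mul_assoc, ← mul_assoc ((L.map (·⁻¹)).prod), ih, one_mul, inv_mul_cancel]

lemma middle_one_map_inv {G : Type*} [Group G] (P S : List G) :
    ((P ++ 1 :: S).map (·⁻¹)).prod = ((P ++ S).map (·⁻¹)).prod := by
  simp [List.map_append, List.prod_append]

lemma middle_one_reverse {G : Type*} [Group G] (P S : List G) :
    (P ++ 1 :: S).reverse.prod = (P ++ S).reverse.prod := by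
  simp [List.reverse_append, List.prod_append]

lemma q_phiElt {n m : ℕ} (q : G3 n →* G3 (n - 1)) (hq : IsShift3 n m q)
    (hm1 : 1 ≤ m) (hm2 : m ≤ n) {i j : ℕ} (hi : 1 ≤ i) (hij : i < j) (hj : j ≤ n) :
    q (phiElt n i j) = if m = i ∨ m = j then 1 else phiElt (n-1) (del m i) (del m j) := by
  unfold phiElt
  rw [map_mul, map_mul, map_pow, map_list_prod, map_list_prod, List.map_map, List.map_map]
  have cA : (List.range' (i+1) (j-1-i)).map (⇑q ∘ fun t => (cElt n i t)⁻¹) =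
      ((List.range' (i+1) (j-1-i)).map (fun t => q (cElt n i t))).map (·⁻¹) := by
    rw [List.map_map]
    exact List.map_congr_left (fun t _ => by simp [Function.comp])
  have cC : (List.range' (i+1) (j-1-i)).reverse.map (⇑q ∘ fun t => cElt n i t) =
      ((List.range' (i+1) (j-1-i)).map (fun t => q (cElt n i t))).reverse := by
    rw [List.map_reverse]
    exact congrArg List.reverse (List.map_congr_left fun t _ => rfl)
  rw [cA, cC]
  by_cases hmi : m = i
  · rw [if_pos (Or.inl hmi)]
    have hz : ∀ t, i < t → t ≤ n → q (cElt n i t) = 1 := by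
      intro t h1 h2
      rw [q_cElt q hq hm1 hm2 hi h1 h2, if_pos (Or.inl hmi)]
    have hL : (List.range' (i+1) (j-1-i)).map (fun t => q (cElt n i t)) =
        (List.range' (i+1) (j-1-i)).map (fun _ => (1 : G3 (n-1))) := by
      apply List.map_congr_left
      intro t ht
      have ht' := List.mem_range'_1.mp ht
      exact hz t (by omega) (by omega)
    rw [hL, hz j hij hj, one_pow]
    simp
  by_cases hmj : m = j
  · rw [if_pos (Or.inr hmj)]
    rw [q_cElt q hq hm1 hm2 hi hij hj, if_pos (Or.inr hmj), one_pow, mul_one]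
    exact inv_rev_prod _
  · rw [if_neg (by tauto)]
    have hval : ∀ t, i < t → t ≤ n → q (cElt n i t) =
        if m = t then 1 else cElt (n-1) (del m i) (del m t) := by
      intro t h1 h2
      rw [q_cElt q hq hm1 hm2 hi h1 h2]
      by_cases h : m = t
      · rw [if_pos (Or.inr h), if_pos h]
      · rw [if_neg (by tauto), if_neg h]
    rw [hval j hij hj, if_neg hmj]
    rw [List.map_reverse]
    rw [show (List.range' (del m i + 1) (del m j - 1 - del m i)).map
          (fun t => (cElt (n-1) (del m i) t)⁻¹) =
        ((List.range' (del m i + 1) (del m j - 1 - del m i)).map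
          (cElt (n-1) (del m i))).map (·⁻¹) from by rw [List.map_map]; rfl]
    rcases Nat.lt_or_ge j m with hjm | hmj2
    · -- m > j
      have di : del m i = i := if_neg (by omega)
      have dj : del m j = j := if_neg (by omega)
      rw [di, dj]
      have hL : (List.range' (i+1) (j-1-i)).map (fun t => q (cElt n i t)) =
          (List.range' (i+1) (j-1-i)).map (cElt (n-1) i) := by
        apply List.map_congr_left
        intro t ht
        have ht' := List.mem_range'_1.mp ht
        rw [hval t (by omega) (by omega), if_neg (by omega), di,
          show del m t = t from if_neg (by omega)]
      rw [hL]
    rcases Nat.lt_or_ge m i with him | him2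
    · -- m < i
      have di : del m i = i - 1 := if_pos him
      have dj : del m j = j - 1 := if_pos (by omega)
      rw [di, dj]
      have hL : (List.range' (i+1) (j-1-i)).map (fun t => q (cElt n i t)) =
          (List.range' i (j-1-i)).map (cElt (n-1) (i-1)) := by
        rw [← map_range'_shift (cElt (n-1) (i-1)) i (j-1-i)]
        apply List.map_congr_left
        intro t ht
        have ht' := List.mem_range'_1.mp ht
        rw [hval t (by omega) (by omega), if_neg (by omega), di,
          show del m t = t - 1 from if_pos (by omega)]
      rw [hL, show (i-1)+1 = i from by omega,
        show (j-1)-1-(i-1) = j-1-i from by omega]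
    · -- i < m < j
      have di : del m i = i := if_neg (by omega)
      have dj : del m j = j - 1 := if_pos (by omega)
      rw [di, dj]
      have hsplit : List.range' (i+1) (j-1-i) =
          List.range' (i+1) (m-1-i) ++ m :: List.range' (m+1) (j-m-1) := by
        have h := range'_split (s := i+1) (c := j-1-i) (m := m) (by omega) (by omega)
        rw [show m - (i+1) = m-1-i by omega, show (i+1)+(j-1-i)-m-1 = j-m-1 by omega] at h
        exact h
      have hP : (List.range' (i+1) (m-1-i)).map (fun t => q (cElt n i t)) =
          (List.range' (i+1) (m-1-i)).map (cElt (n-1) i) := by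
        apply List.map_congr_left
        intro t ht
        have ht' := List.mem_range'_1.mp ht
        rw [hval t (by omega) (by omega), if_neg (by omega), di,
          show del m t = t from if_neg (by omega)]
      have hS : (List.range' (m+1) (j-m-1)).map (fun t => q (cElt n i t)) =
          (List.range' m (j-m-1)).map (cElt (n-1) i) := by
        rw [← map_range'_shift (cElt (n-1) i) m (j-m-1)]
        apply List.map_congr_left
        intro t ht
        have ht' := List.mem_range'_1.mp ht
        rw [hval t (by omega) (by omega), if_neg (by omega), di,
          show del m t = t - 1 from if_pos (by omega)]
      have hm' : q (cElt n i m) = 1 := by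
        rw [hval m (by omega) (by omega), if_pos rfl]
      have hL : (List.range' (i+1) (j-1-i)).map (fun t => q (cElt n i t)) =
          (List.range' (i+1) (m-1-i)).map (cElt (n-1) i) ++ 1 ::
          (List.range' m (j-m-1)).map (cElt (n-1) i) := by
        rw [hsplit, List.map_append, List.map_cons, hP, hS, hm']
      have hPS : (List.range' (i+1) (m-1-i)).map (cElt (n-1) i) ++
          (List.range' m (j-m-1)).map (cElt (n-1) i) =
          (List.range' (i+1) (j-1-1-i)).map (cElt (n-1) i) := by
        rw [← List.map_append]
        congr 1
        have h := (List.range'_append_1 (s := (i+1)) (m := (m-1-i)) (n := (j-m-1))).trans (congrArg (List.range' (i+1)) (Nat.add_comm _ _))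
        rw [show (i+1)+(m-1-i) = m from by omega,
          show (j-m-1)+(m-1-i) = j-1-1-i from by omega] at h
        exact h
      rw [hL, middle_one_map_inv, middle_one_reverse, hPS]

end Aux

theorem statement_4 (n m : ℕ) (hn : 4 ≤ n) (hm1 : 1 ≤ m) (hm2 : m ≤ n)
    (q : G3 n →* G3 (n - 1)) (hq : IsShift3 n m q)
    (p : PB n →* PB (n - 1)) (hp : IsShiftPB n m p)
    (φ : PB n →* G3 n) (hφ : IsPhi n φ)
    (φ' : PB (n - 1) →* G3 (n - 1)) (hφ' : IsPhi (n - 1) φ') :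
    q.comp φ = φ'.comp p := by
  refine PresentedGroup.ext fun x => ?_
  obtain ⟨⟨i, j⟩, hx⟩ := x
  obtain ⟨h1, h2, h3⟩ := hx
  simp only [MonoidHom.comp_apply]
  have hs : sort2 i j = (i, j) := by simp only [sort2, Prod.mk.injEq]; omega
  have hgen : (PresentedGroup.of ⟨(i,j), ⟨h1,h2,h3⟩⟩ : PB n) = pbgen n i j := by
    simp only [pbgen, hs]
    rw [dif_pos ⟨h1,h2,h3⟩]
  rw [hgen, hφ i j h1 h2 h3, hp i j h1 h2 h3]
  rw [q_phiElt q hq hm1 hm2 h1 h2 h3]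
  by_cases hc : m = i ∨ m = j
  · rw [if_pos hc, if_pos hc, map_one]
  · rw [if_neg hc, if_neg hc]
    push_neg at hc
    have hij' : del m i < del m j := by simp only [del]; split_ifs <;> omega
    have h1' : 1 ≤ del m i := by simp only [del]; split_ifs <;> omega
    have h3' : del m j ≤ n - 1 := by simp only [del]; split_ifs <;> omega
    rw [hφ' (del m i) (del m j) h1' hij' h3']


end GnkBrunnian
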